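/- The number of homomorphisms from an undirected graph H to an acyclically oriented graph G (ignoring orientations of G) equals the sum, over all acyclic orientations σ of H, of the number of orientation-preserving homomorphisms from H_σ to G. -/

import Mathlib

/-- A source of a digraph (relation `r`): a vertex with no incoming arc. -/
def IsSource {V : Type*} (r : V → V → Prop) (v : V) : Prop := ∀ u, ¬ r u v

/-- A digraph is acyclic if it has no directed cycle. -/
def DigraphAcyclic {V : Type*} (r : V → V → Prop) : Prop :=
  ∀ v, ¬ Relation.TransGen r v v

/-- `r` is an orientation of the simple graph `G`: every edge gets exactly one direction. -/
def IsOrientationOf {V : Type*} (G : SimpleGraph V) (r : V → V → Prop) : Prop :=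
  (∀ u v, G.Adj u v ↔ (r u v ∨ r v u)) ∧ ∀ u v, r u v → ¬ r v u

/-- The number of homomorphisms from an undirected graph `H` to (the underlying graph
of) a dag `G` equals the sum, over all acyclic orientations `σ` of `H`, of the number
of orientation-preserving homomorphisms from `H_σ` to `G`. -/
theorem hom_count_eq_sum_orientations {VH W : Type*} [Fintype VH] [DecidableEq VH]
    [Fintype W] (H : SimpleGraph VH) (s : W → W → Prop) (hs : DigraphAcyclic s) :
    {φ : VH → W | ∀ u v, H.Adj u v → s (φ u) (φ v) ∨ s (φ v) (φ u)}.ncard =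
      ∑ σ : VH → VH → Bool,
        {φ : VH → W |
          (IsOrientationOf H (fun a b => σ a b = true) ∧
            DigraphAcyclic (fun a b => σ a b = true)) ∧
          ∀ a b, σ a b = true → s (φ a) (φ b)}.ncard := by
  classical
  have hasym : ∀ w x, s w x → ¬ s x w := fun w x h h' =>
    hs w ((Relation.TransGen.single h).tail h')
  set f : (VH → W) → (VH → VH → Bool) :=
    fun φ a b => decide (H.Adj a b ∧ s (φ a) (φ b)) with hf
  set P : (VH → W) → Prop :=
    fun φ => ∀ u v, H.Adj u v → s (φ u) (φ v) ∨ s (φ v) (φ u) with hP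
  set Q : (VH → VH → Bool) → (VH → W) → Prop := fun σ φ =>
    (IsOrientationOf H (fun a b => σ a b = true) ∧
      DigraphAcyclic (fun a b => σ a b = true)) ∧
    ∀ a b, σ a b = true → s (φ a) (φ b) with hQ
  have key : ∀ σ φ, (P φ ∧ f φ = σ) ↔ Q σ φ := by
    intro σ φ
    constructor
    · rintro ⟨hPφ, rfl⟩
      have hiff : ∀ a b, f φ a b = true ↔ (H.Adj a b ∧ s (φ a) (φ b)) := by
        intro a b; simp [hf]
      refine ⟨⟨⟨fun u v => ?_, fun u v h h' => ?_⟩, fun v hv => ?_⟩, fun a b h => ((hiff a b).1 h).2⟩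
      · constructor
        · intro h
          rcases hPφ u v h with h' | h'
          · exact Or.inl ((hiff u v).2 ⟨h, h'⟩)
          · exact Or.inr ((hiff v u).2 ⟨h.symm, h'⟩)
        · rintro (h | h)
          · exact ((hiff u v).1 h).1
          · exact (((hiff v u).1 h).1).symm
      · exact hasym _ _ ((hiff u v).1 h).2 ((hiff v u).1 h').2
      · exact hs (φ v) (Relation.TransGen.lift φ (fun a b h => ((hiff a b).1 h).2) _ _ hv)
    · rintro ⟨⟨⟨hor, hasym'⟩, hac⟩, harc⟩
      constructor
      · intro u v h
        rcases (hor u v).1 h with h' | h'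
        · exact Or.inl (harc _ _ h')
        · exact Or.inr (harc _ _ h')
      · funext a b
        by_cases h : σ a b = true
        · have hAdj : H.Adj a b := (hor a b).2 (Or.inl h)
          simp [hf, hAdj, harc a b h, h]
        · have : ¬ (H.Adj a b ∧ s (φ a) (φ b)) := by
            rintro ⟨hAdj, hsab⟩
            rcases (hor a b).1 hAdj with h' | h'
            · exact h h'
            · exact hasym _ _ hsab (harc _ _ h')
          simp only [Bool.not_eq_true] at h
          simp only [hf, h, decide_eq_false_iff_not]
          exact this
  set A : Finset (VH → W) := Finset.univ.filter P with hA
  have hLHS : {φ : VH → W | P φ} = ↑A := by ext φ; simp [hA]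
  have hRHS : ∀ σ : VH → VH → Bool,
      {φ : VH → W | Q σ φ} = ↑(A.filter (fun φ => f φ = σ)) := by
    intro σ; ext φ
    simp only [Set.mem_setOf_eq, Finset.coe_filter, hA, Finset.mem_filter,
      Finset.mem_univ, true_and, Set.mem_setOf_eq]
    exact (key σ φ).symm
  calc {φ : VH → W | P φ}.ncard = A.card := by rw [hLHS, Set.ncard_coe_finset]
    _ = ∑ σ : VH → VH → Bool, (A.filter (fun φ => f φ = σ)).card :=
        Finset.card_eq_sum_card_fiberwise (fun φ _ => Finset.mem_univ (f φ))
    _ = ∑ σ : VH → VH → Bool, {φ : VH → W | Q σ φ}.ncard := by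
        refine Finset.sum_congr rfl fun σ _ => ?_
        rw [hRHS σ, Set.ncard_coe_finset]
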